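/- Let A, K, A′, K′ be n×n real matrices and m a positive integer, with A and A + m·K invertible. Then the trace of rQK(A,K)⁻¹ · rQK(A′,K′) equals tr( (A + m·K)⁻¹ · (A′ + m·K′) ) + (m−1)·tr( A⁻¹ · A′ ). -/
import Mathlib


open Matrix Kronecker

/-- The restricted quasi-Kronecker matrix `rQK(A, K) = I_m ⊗ A + (e eᵗ) ⊗ K`. -/
noncomputable def rQK {n : ℕ} (m : ℕ) (A K : Matrix (Fin n) (Fin n) ℝ) :
    Matrix (Fin m × Fin n) (Fin m × Fin n) ℝ :=
  (1 : Matrix (Fin m) (Fin m) ℝ) ⊗ₖ A + (Matrix.of fun _ _ => (1 : ℝ)) ⊗ₖ K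

/-- Trace identity: `tr(rQK(A,K)⁻¹ · rQK(A′,K′)) = tr((A + m·K)⁻¹(A′ + m·K′))
+ (m−1)·tr(A⁻¹A′)`, for `A` and `A + m·K` invertible. -/
theorem rQK_inv_mul_trace (n m : ℕ) (hm : 0 < m)
    (A K A' K' : Matrix (Fin n) (Fin n) ℝ)
    (hA : IsUnit A.det) (hAK : IsUnit (A + (m : ℝ) • K).det) :
    ((rQK m A K)⁻¹ * rQK m A' K').trace =
      ((A + (m : ℝ) • K)⁻¹ * (A' + (m : ℝ) • K')).trace +
        ((m : ℝ) - 1) * (A⁻¹ * A').trace := by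
  set J : Matrix (Fin m) (Fin m) ℝ := Matrix.of fun _ _ => (1 : ℝ) with hJdef
  set B : Matrix (Fin n) (Fin n) ℝ := (A + (m : ℝ) • K)⁻¹ with hBdef
  set C : Matrix (Fin n) (Fin n) ℝ := -(B * (K * A⁻¹)) with hCdef
  have hA1 : A * A⁻¹ = 1 := Matrix.mul_nonsing_inv _ hA
  have hB1 : (A + (m : ℝ) • K) * B = 1 := Matrix.mul_nonsing_inv _ hAK
  have hB2 : B * (A + (m : ℝ) • K) = 1 := Matrix.nonsing_inv_mul _ hAK
  have hJJ : J * J = (m : ℝ) • J := by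
    ext i j
    simp [Matrix.mul_apply, hJdef]
  -- key matrix identity: A*C + (K*A⁻¹ + m•(K*C)) = 0
  have hAmKC : (A + (m : ℝ) • K) * C = -(K * A⁻¹) := by
    rw [hCdef, Matrix.mul_neg, ← Matrix.mul_assoc, hB1, Matrix.one_mul]
  have hC : A * C + (K * A⁻¹ + (m : ℝ) • (K * C)) = 0 := by
    have h : A * C + (m : ℝ) • (K * C) = (A + (m : ℝ) • K) * C := by
      rw [Matrix.add_mul, Matrix.smul_mul]
    have : A * C + (K * A⁻¹ + (m : ℝ) • (K * C))
        = (A + (m : ℝ) • K) * C + K * A⁻¹ := by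
      rw [← h]; abel
    rw [this, hAmKC]
    abel
  -- B = A⁻¹ + m • C
  have hBC : B = A⁻¹ + (m : ℝ) • C := by
    have h1 : B * A + (m : ℝ) • (B * K) = 1 := by
      rw [← hB2, Matrix.mul_add, Matrix.mul_smul]
    have h2 : B * A = 1 - (m : ℝ) • (B * K) := by
      rw [← h1]; abel
    calc B = B * (A * A⁻¹) := by rw [hA1, Matrix.mul_one]
      _ = (B * A) * A⁻¹ := by rw [Matrix.mul_assoc]
      _ = A⁻¹ - (m : ℝ) • (B * (K * A⁻¹)) := by
          rw [h2, Matrix.sub_mul, Matrix.one_mul, Matrix.smul_mul, Matrix.mul_assoc]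
      _ = A⁻¹ + (m : ℝ) • C := by rw [hCdef]; module
  -- explicit inverse of rQK m A K
  have hprod : rQK m A K * ((1 : Matrix (Fin m) (Fin m) ℝ) ⊗ₖ A⁻¹ + J ⊗ₖ C) = 1 := by
    rw [rQK, ← hJdef]
    rw [Matrix.add_mul, Matrix.mul_add, Matrix.mul_add,
      ← Matrix.mul_kronecker_mul, ← Matrix.mul_kronecker_mul,
      ← Matrix.mul_kronecker_mul, ← Matrix.mul_kronecker_mul,
      Matrix.one_mul, Matrix.mul_one, Matrix.one_mul, hA1, hJJ,
      Matrix.smul_kronecker, ← Matrix.kronecker_smul]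
    have : (1 : Matrix (Fin m) (Fin m) ℝ) ⊗ₖ (1 : Matrix (Fin n) (Fin n) ℝ) = 1 :=
      Matrix.one_kronecker_one
    rw [this]
    have : J ⊗ₖ (A * C) + (J ⊗ₖ (K * A⁻¹) + J ⊗ₖ ((m : ℝ) • (K * C)))
        = J ⊗ₖ (A * C + (K * A⁻¹ + (m : ℝ) • (K * C))) := by
      rw [Matrix.kronecker_add, Matrix.kronecker_add]
    rw [add_assoc, this, hC, Matrix.kronecker_zero, add_zero]
  have hinv : (rQK m A K)⁻¹ = (1 : Matrix (Fin m) (Fin m) ℝ) ⊗ₖ A⁻¹ + J ⊗ₖ C :=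
    Matrix.inv_eq_right_inv hprod
  rw [hinv, rQK, ← hJdef]
  -- expand the product and take traces
  rw [Matrix.add_mul, Matrix.mul_add, Matrix.mul_add,
    ← Matrix.mul_kronecker_mul, ← Matrix.mul_kronecker_mul,
    ← Matrix.mul_kronecker_mul, ← Matrix.mul_kronecker_mul,
    Matrix.one_mul, Matrix.mul_one, Matrix.one_mul, hJJ, Matrix.smul_kronecker]
  have htrJ : J.trace = (m : ℝ) := by simp [Matrix.trace, hJdef]
  have htr1 : (1 : Matrix (Fin m) (Fin m) ℝ).trace = (m : ℝ) := by
    simp [Matrix.trace_one]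
  rw [Matrix.trace_add, Matrix.trace_add, Matrix.trace_add, Matrix.trace_smul,
    Matrix.trace_kronecker, Matrix.trace_kronecker, Matrix.trace_kronecker,
    Matrix.trace_kronecker, htrJ, htr1]
  rw [hBC]
  simp only [Matrix.add_mul, Matrix.mul_add, Matrix.smul_mul, Matrix.mul_smul,
    Matrix.trace_add, Matrix.trace_smul, smul_eq_mul]
  ring
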